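/- Let x = E_{n,k}^λ(m) be a codeword for some message m ∈ {0,1}^k, let i ∈ {1,…,k}, and let j be any index with i < j ≤ n and x_j ≠ x_i. Then x_i > x_j if and only if m_i = 1 (and x_i < x_j if and only if m_i = 0); consequently the local decoder, run on an uncorrupted codeword, always outputs the correct bit m_i. -/

import Mathlib

open Finset

/-- Ceiling division: `cdiv a b = ⌈a/b⌉` for natural numbers (with `b > 0`). -/
def cdiv (a b : ℕ) : ℕ := (a + b - 1) / b

/-- `ones msg i` : number of indices `j < i` (0-indexed) with `msg j = 1`. -/
def ones {k : ℕ} (msg : Fin k → Bool) (i : ℕ) : ℕ :=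
  (univ.filter fun j : Fin k => j.val < i ∧ msg j = true).card

/-- `zeros msg i` : number of indices `j < i` (0-indexed) with `msg j = 0`. -/
def zeros {k : ℕ} (msg : Fin k → Bool) (i : ℕ) : ℕ :=
  (univ.filter fun j : Fin k => j.val < i ∧ msg j = false).card

/-- The encoding map `E_{n,k}^λ`.  The `i`-th entry (0-indexed `i`, so 1-indexed
position `i+1`) of the codeword of `msg` is `⌈(n − o_i)/λ⌉` if `msg i = 1`,
`⌈(1 + z_i)/λ⌉` if `msg i = 0` (where `o_i`, `z_i` count ones resp. zeros among
the earlier message bits), and `⌈((i+1) − o)/λ⌉` for positions past `k`, where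
`o` is the total number of ones in `msg`. -/
def enc (n k lam : ℕ) (msg : Fin k → Bool) : Fin n → ℕ :=
  fun i =>
    if h : i.val < k then
      if msg ⟨i.val, h⟩ = true then cdiv (n - ones msg i.val) lam
      else cdiv (1 + zeros msg i.val) lam
    else cdiv (i.val + 1 - ones msg k) lam

/-- `ℓ∞` distance between two sequences of naturals. -/
def linfN {n : ℕ} (x y : Fin n → ℕ) : ℕ :=
  univ.sup fun i => ((x i : ℤ) - (y i : ℤ)).natAbs

/-- Membership in `S_n^λ` : all entries lie in `{1,…,m}` and each symbol
`v ∈ {1,…,m}` occurs exactly `λ` times. -/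
def memSnl (n m lam : ℕ) (x : Fin n → ℕ) : Prop :=
  (∀ i, x i ∈ Finset.Icc 1 m) ∧
  ∀ v ∈ Finset.Icc 1 m, (univ.filter fun i => x i = v).card = lam

lemma cdiv_mono {a b c : ℕ} (h : a ≤ b) : cdiv a c ≤ cdiv b c :=
  Nat.div_le_div_right (by omega)

lemma count_lt {k : ℕ} {msg : Fin k → Bool} {b : Bool} {i : Fin k} (hi : msg i = b)
    {t : ℕ} (hit : i.val < t) :
    (univ.filter fun j : Fin k => j.val < i.val ∧ msg j = b).card <
    (univ.filter fun j : Fin k => j.val < t ∧ msg j = b).card := by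
  apply Finset.card_lt_card
  rw [Finset.ssubset_iff_of_subset]
  · exact ⟨i, by simp [hit, hi], by simp⟩
  · intro a ha
    simp only [mem_filter, mem_univ, true_and] at ha ⊢
    exact ⟨by omega, ha.2⟩

lemma ones_lt {k : ℕ} {msg : Fin k → Bool} {i : Fin k} (hi : msg i = true)
    {t : ℕ} (hit : i.val < t) : ones msg i.val < ones msg t :=
  count_lt hi hit

lemma zeros_lt {k : ℕ} {msg : Fin k → Bool} {i : Fin k} (hi : msg i = false)
    {t : ℕ} (hit : i.val < t) : zeros msg i.val < zeros msg t :=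
  count_lt hi hit

lemma ones_add_zeros_le {k : ℕ} (msg : Fin k → Bool) (t : ℕ) :
    ones msg t + zeros msg t ≤ min t k := by
  have h1 : ones msg t + zeros msg t = (univ.filter fun j : Fin k => j.val < t).card := by
    rw [ones, zeros, ← Finset.card_union_of_disjoint ?_]
    · congr 1
      ext a
      simp only [mem_union, mem_filter, mem_univ, true_and]
      cases h : msg a <;> tauto
    · rw [Finset.disjoint_left]
      intro a ha hb
      simp only [mem_filter, mem_univ, true_and] at ha hb
      exact absurd hb.2 (by simp [ha.2])
  rw [h1]
  refine le_min ?_ ?_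
  · calc (univ.filter fun j : Fin k => j.val < t).card
        ≤ (Finset.range t).card :=
          Finset.card_le_card_of_injOn Fin.val
            (by intro a ha; simp_all [Finset.mem_range])
            (fun a _ b _ h => Fin.val_injective h)
    _ = t := Finset.card_range t
  · exact (Finset.card_filter_le _ _).trans (by simp)

/-- On an uncorrupted codeword `x = E_{n,k}^λ(msg)`, any later position `j`
with `x_j ≠ x_i` reveals the bit `m_i`: `x_i > x_j ↔ m_i = 1` and
`x_i < x_j ↔ m_i = 0`; hence the local decoder always outputs `m_i` correctly
on codewords. -/
theorem local_decoder_correct_on_codewords (lam m k : ℕ) (hl : 0 < lam)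
    (hm : 0 < m) (hk : 0 < k) (n : ℕ) (hn : n = m * lam) (hkn : k + lam ≤ n)
    (msg : Fin k → Bool) (i : Fin k) (j : Fin n) (hij : i.val < j.val)
    (hne : enc n k lam msg j ≠ enc n k lam msg ⟨i.val, by have := i.isLt; omega⟩) :
    (enc n k lam msg ⟨i.val, by have := i.isLt; omega⟩ > enc n k lam msg j
        ↔ msg i = true) ∧
    (enc n k lam msg ⟨i.val, by have := i.isLt; omega⟩ < enc n k lam msg j
        ↔ msg i = false) := by
  have hik : i.val < k := i.isLt
  have hin : i.val < n := by have := i.isLt; omega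
  have hkle : k ≤ n := by omega
  have hxi_t : msg i = true →
      enc n k lam msg ⟨i.val, hin⟩ = cdiv (n - ones msg i.val) lam := by
    intro hb; simp [enc, hik, Fin.eta, hb]
  have hxi_f : msg i = false →
      enc n k lam msg ⟨i.val, hin⟩ = cdiv (1 + zeros msg i.val) lam := by
    intro hb; simp [enc, hik, Fin.eta, hb]
  have key1 : msg i = true → enc n k lam msg j ≤ enc n k lam msg ⟨i.val, hin⟩ := by
    intro hb
    rw [hxi_t hb]
    by_cases hjk : j.val < k
    · have h1 := ones_lt hb hij
      have h2 := ones_add_zeros_le msg j.val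
      by_cases hbj : msg ⟨j.val, hjk⟩ = true
      · have : enc n k lam msg j = cdiv (n - ones msg j.val) lam := by
          simp [enc, hjk, hbj]
        rw [this]; exact cdiv_mono (by omega)
      · have : enc n k lam msg j = cdiv (1 + zeros msg j.val) lam := by
          simp [enc, hjk, hbj]
        rw [this]; exact cdiv_mono (by omega)
    · have h1 := ones_lt hb hik
      have h2 := ones_add_zeros_le msg k
      have hjn : j.val < n := j.isLt
      have : enc n k lam msg j = cdiv (j.val + 1 - ones msg k) lam := by
        simp [enc, hjk]
      rw [this]; exact cdiv_mono (by omega)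
  have key0 : msg i = false → enc n k lam msg ⟨i.val, hin⟩ ≤ enc n k lam msg j := by
    intro hb
    rw [hxi_f hb]
    by_cases hjk : j.val < k
    · have h1 := zeros_lt hb hij
      have h2 := ones_add_zeros_le msg j.val
      by_cases hbj : msg ⟨j.val, hjk⟩ = true
      · have : enc n k lam msg j = cdiv (n - ones msg j.val) lam := by
          simp [enc, hjk, hbj]
        rw [this]; exact cdiv_mono (by omega)
      · have : enc n k lam msg j = cdiv (1 + zeros msg j.val) lam := by
          simp [enc, hjk, hbj]
        rw [this]; exact cdiv_mono (by omega)
    · have h1 := zeros_lt hb hik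
      have h2 := ones_add_zeros_le msg k
      have hkj : k ≤ j.val := by omega
      have : enc n k lam msg j = cdiv (j.val + 1 - ones msg k) lam := by
        simp [enc, hjk]
      rw [this]; exact cdiv_mono (by omega)
  cases hb : msg i with
  | true =>
    have h1 := key1 hb
    have h2 : enc n k lam msg j < enc n k lam msg ⟨i.val, hin⟩ :=
      lt_of_le_of_ne h1 hne
    constructor <;> constructor <;> intro h <;> simp_all <;> omega
  | false =>
    have h1 := key0 hb
    have h2 : enc n k lam msg ⟨i.val, hin⟩ < enc n k lam msg j :=
      lt_of_le_of_ne h1 (Ne.symm hne)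
    constructor <;> constructor <;> intro h <;> simp_all <;> omega
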